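/- Let G be an ample groupoid such that G⁰ is σ-compact, and suppose that K ⊆ G⁰ is clopen and G-full. Then there is an open bisection Y ⊆ G × ℛ such that r(Y) = G⁰ × ℕ and s(Y) = K × ℕ. -/

import Mathlib

set_option linter.unusedSectionVars false

universe u v w

/-- An (algebraic) groupoid structure on a type `G` of arrows.  The multiplication is a total
function, but all axioms involving `mul a b` are only imposed when `a` and `b` are composable,
i.e. when `src a = rng b`.  Units are the common values of `src` and `rng`. -/
structure GroupoidStruct (G : Type u) where
  src : G → G
  rng : G → G
  mul : G → G → G
  inv : G → G
  src_src : ∀ a, src (src a) = src a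
  rng_src : ∀ a, rng (src a) = src a
  src_rng : ∀ a, src (rng a) = rng a
  rng_rng : ∀ a, rng (rng a) = rng a
  mul_assoc : ∀ a b c, src a = rng b → src b = rng c → mul (mul a b) c = mul a (mul b c)
  src_mul : ∀ a b, src a = rng b → src (mul a b) = src b
  rng_mul : ∀ a b, src a = rng b → rng (mul a b) = rng a
  mul_src : ∀ a, mul a (src a) = a
  rng_mul_self : ∀ a, mul (rng a) a = a
  src_inv : ∀ a, src (inv a) = rng a
  rng_inv : ∀ a, rng (inv a) = src a
  mul_inv : ∀ a, mul a (inv a) = rng a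
  inv_mul : ∀ a, mul (inv a) a = src a

namespace GroupoidStruct

variable {G : Type u} {H : Type v}

/-- The unit space `G⁰` of a groupoid. -/
def units (S : GroupoidStruct G) : Set G := {x | S.src x = x ∧ S.rng x = x}

/-- The range map, viewed as a map `G → G⁰`. -/
def rngMap (S : GroupoidStruct G) (g : G) : S.units := ⟨S.rng g, S.src_rng g, S.rng_rng g⟩

/-- The source map, viewed as a map `G → G⁰`. -/
def srcMap (S : GroupoidStruct G) (g : G) : S.units := ⟨S.src g, S.src_src g, S.rng_src g⟩

/-- A topological groupoid: inversion is continuous and multiplication is continuous on the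
set of composable pairs. -/
structure IsTopologicalGroupoid [TopologicalSpace G] (S : GroupoidStruct G) : Prop where
  continuous_inv : Continuous S.inv
  continuousOn_mul :
    ContinuousOn (fun p : G × G => S.mul p.1 p.2) {p : G × G | S.src p.1 = S.rng p.2}

/-- An ample groupoid: a topological groupoid whose topology has a basis of compact open sets,
whose unit space is Hausdorff, and whose range and source maps are local homeomorphisms onto
the unit space. -/
structure IsAmple [TopologicalSpace G] (S : GroupoidStruct G)
    extends IsTopologicalGroupoid S : Prop where
  compact_open_basis : ∃ B : Set (Set G),
    (∀ U ∈ B, IsCompact U ∧ IsOpen U) ∧ TopologicalSpace.IsTopologicalBasis B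
  t2_units : T2Space S.units
  isLocalHomeomorph_rngMap : IsLocalHomeomorph S.rngMap
  isLocalHomeomorph_srcMap : IsLocalHomeomorph S.srcMap

/-- `K ⊆ G⁰` is `G`-full if `r(GK) = G⁰`, where `GK = s⁻¹(K)`. -/
def IsFull (S : GroupoidStruct G) (K : Set G) : Prop := S.rng '' (S.src ⁻¹' K) = S.units

/-- `K` is an open subset of the unit space (in the subspace topology of `G⁰`). -/
def IsUnitOpen [TopologicalSpace G] (S : GroupoidStruct G) (K : Set G) : Prop :=
  K ⊆ S.units ∧ IsOpen {x : S.units | (x : G) ∈ K}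

/-- `K` is a clopen subset of the unit space (in the subspace topology of `G⁰`). -/
def IsUnitClopen [TopologicalSpace G] (S : GroupoidStruct G) (K : Set G) : Prop :=
  K ⊆ S.units ∧ IsClopen {x : S.units | (x : G) ∈ K}

/-- `K` is a compact open subset of the unit space. -/
def IsUnitCompactOpen [TopologicalSpace G] (S : GroupoidStruct G) (K : Set G) : Prop :=
  K ⊆ S.units ∧ IsCompact K ∧ IsOpen {x : S.units | (x : G) ∈ K}

/-- An open bisection: an open set on which both the range and the source map restrict to
homeomorphisms onto their images (i.e. are topological embeddings). -/
def IsOpenBisection [TopologicalSpace G] (S : GroupoidStruct G) (U : Set G) : Prop :=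
  IsOpen U ∧ Topology.IsEmbedding (U.restrict S.rng) ∧ Topology.IsEmbedding (U.restrict S.src)

/-- A compact open bisection. -/
def IsCompactOpenBisection [TopologicalSpace G] (S : GroupoidStruct G) (U : Set G) : Prop :=
  IsCompact U ∧ S.IsOpenBisection U

/-- The product of two groupoids, with coordinatewise operations. -/
def prod (S : GroupoidStruct G) (T : GroupoidStruct H) : GroupoidStruct (G × H) where
  src p := (S.src p.1, T.src p.2)
  rng p := (S.rng p.1, T.rng p.2)
  mul p q := (S.mul p.1 q.1, T.mul p.2 q.2)
  inv p := (S.inv p.1, T.inv p.2)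
  src_src a := Prod.ext_iff.mpr ⟨S.src_src _, T.src_src _⟩
  rng_src a := Prod.ext_iff.mpr ⟨S.rng_src _, T.rng_src _⟩
  src_rng a := Prod.ext_iff.mpr ⟨S.src_rng _, T.src_rng _⟩
  rng_rng a := Prod.ext_iff.mpr ⟨S.rng_rng _, T.rng_rng _⟩
  mul_assoc a b c h1 h2 := by
    obtain ⟨h1a, h1b⟩ := Prod.ext_iff.mp h1
    obtain ⟨h2a, h2b⟩ := Prod.ext_iff.mp h2
    exact Prod.ext_iff.mpr ⟨S.mul_assoc _ _ _ h1a h2a, T.mul_assoc _ _ _ h1b h2b⟩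
  src_mul a b h := by
    obtain ⟨ha, hb⟩ := Prod.ext_iff.mp h
    exact Prod.ext_iff.mpr ⟨S.src_mul _ _ ha, T.src_mul _ _ hb⟩
  rng_mul a b h := by
    obtain ⟨ha, hb⟩ := Prod.ext_iff.mp h
    exact Prod.ext_iff.mpr ⟨S.rng_mul _ _ ha, T.rng_mul _ _ hb⟩
  mul_src a := Prod.ext_iff.mpr ⟨S.mul_src _, T.mul_src _⟩
  rng_mul_self a := Prod.ext_iff.mpr ⟨S.rng_mul_self _, T.rng_mul_self _⟩
  src_inv a := Prod.ext_iff.mpr ⟨S.src_inv _, T.src_inv _⟩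
  rng_inv a := Prod.ext_iff.mpr ⟨S.rng_inv _, T.rng_inv _⟩
  mul_inv a := Prod.ext_iff.mpr ⟨S.mul_inv _, T.mul_inv _⟩
  inv_mul a := Prod.ext_iff.mpr ⟨S.inv_mul _, T.inv_mul _⟩

/-- The full equivalence relation `ℛ = ℕ × ℕ`, regarded as a (discrete, principal) groupoid
with unit space `ℕ`. -/
def Rho : GroupoidStruct (ℕ × ℕ) where
  src p := (p.2, p.2)
  rng p := (p.1, p.1)
  mul p q := (p.1, q.2)
  inv p := (p.2, p.1)
  src_src _ := rfl
  rng_src _ := rfl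
  src_rng _ := rfl
  rng_rng _ := rfl
  mul_assoc _ _ _ _ _ := rfl
  src_mul _ _ _ := rfl
  rng_mul _ _ _ := rfl
  mul_src _ := rfl
  rng_mul_self _ := rfl
  src_inv _ := rfl
  rng_inv _ := rfl
  mul_inv _ := rfl
  inv_mul _ := rfl

/-- An isomorphism of topological groupoids: a homeomorphism of the arrow spaces respecting
all the groupoid operations. -/
structure GroupoidIso [TopologicalSpace G] [TopologicalSpace H]
    (S : GroupoidStruct G) (T : GroupoidStruct H) extends G ≃ₜ H where
  map_mul : ∀ a b, S.src a = S.rng b →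
    toHomeomorph (S.mul a b) = T.mul (toHomeomorph a) (toHomeomorph b)
  map_inv : ∀ a, toHomeomorph (S.inv a) = T.inv (toHomeomorph a)
  map_src : ∀ a, toHomeomorph (S.src a) = T.src (toHomeomorph a)
  map_rng : ∀ a, toHomeomorph (S.rng a) = T.rng (toHomeomorph a)

/-- The arrow space `G|_K = r⁻¹(K) ∩ s⁻¹(K)` of the restriction of `G` to `K ⊆ G⁰`,
with the subspace topology. -/
abbrev Restrict (S : GroupoidStruct G) (K : Set G) : Type u :=
  {g : G // S.rng g ∈ K ∧ S.src g ∈ K}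

variable (S : GroupoidStruct G) (K : Set G)

def rsrc (a : S.Restrict K) : S.Restrict K :=
  ⟨S.src a.1, by rw [S.rng_src]; exact a.2.2, by rw [S.src_src]; exact a.2.2⟩

def rrng (a : S.Restrict K) : S.Restrict K :=
  ⟨S.rng a.1, by rw [S.rng_rng]; exact a.2.1, by rw [S.src_rng]; exact a.2.1⟩

def rinv (a : S.Restrict K) : S.Restrict K :=
  ⟨S.inv a.1, by rw [S.rng_inv]; exact a.2.2, by rw [S.src_inv]; exact a.2.1⟩

open Classical in
noncomputable def rmul (a b : S.Restrict K) : S.Restrict K :=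
  if h : S.src a.1 = S.rng b.1 then
    ⟨S.mul a.1 b.1, by rw [S.rng_mul _ _ h]; exact a.2.1, by rw [S.src_mul _ _ h]; exact b.2.2⟩
  else a

@[simp] lemma rsrc_val (a : S.Restrict K) : (S.rsrc K a).1 = S.src a.1 := rfl
@[simp] lemma rrng_val (a : S.Restrict K) : (S.rrng K a).1 = S.rng a.1 := rfl
@[simp] lemma rinv_val (a : S.Restrict K) : (S.rinv K a).1 = S.inv a.1 := rfl

lemma rmul_val (a b : S.Restrict K) (h : S.src a.1 = S.rng b.1) :
    (S.rmul K a b).1 = S.mul a.1 b.1 := by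
  unfold rmul
  rw [dif_pos h]

/-- The restriction `G|_K` of a groupoid to a subset `K` of its unit space. -/
noncomputable def restrict : GroupoidStruct (S.Restrict K) where
  src := S.rsrc K
  rng := S.rrng K
  mul := S.rmul K
  inv := S.rinv K
  src_src a := Subtype.ext (S.src_src a.1)
  rng_src a := Subtype.ext (S.rng_src a.1)
  src_rng a := Subtype.ext (S.src_rng a.1)
  rng_rng a := Subtype.ext (S.rng_rng a.1)
  mul_assoc a b c h1 h2 := by
    have h1' : S.src a.1 = S.rng b.1 := congrArg Subtype.val h1
    have h2' : S.src b.1 = S.rng c.1 := congrArg Subtype.val h2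
    have hab := S.rmul_val K a b h1'
    have hbc := S.rmul_val K b c h2'
    apply Subtype.ext
    calc (S.rmul K (S.rmul K a b) c).1
        = S.mul (S.rmul K a b).1 c.1 :=
          S.rmul_val K _ _ (by rw [hab, S.src_mul _ _ h1']; exact h2')
      _ = S.mul (S.mul a.1 b.1) c.1 := by rw [hab]
      _ = S.mul a.1 (S.mul b.1 c.1) := S.mul_assoc _ _ _ h1' h2'
      _ = S.mul a.1 (S.rmul K b c).1 := by rw [hbc]
      _ = (S.rmul K a (S.rmul K b c)).1 :=
          (S.rmul_val K _ _ (by rw [hbc, S.rng_mul _ _ h2']; exact h1')).symm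
  src_mul a b h := by
    have h' : S.src a.1 = S.rng b.1 := congrArg Subtype.val h
    apply Subtype.ext
    show S.src (S.rmul K a b).1 = S.src b.1
    rw [S.rmul_val K a b h', S.src_mul _ _ h']
  rng_mul a b h := by
    have h' : S.src a.1 = S.rng b.1 := congrArg Subtype.val h
    apply Subtype.ext
    show S.rng (S.rmul K a b).1 = S.rng a.1
    rw [S.rmul_val K a b h', S.rng_mul _ _ h']
  mul_src a := by
    apply Subtype.ext
    rw [S.rmul_val K a _ (by rw [rsrc_val, S.rng_src]), rsrc_val]
    exact S.mul_src a.1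
  rng_mul_self a := by
    apply Subtype.ext
    rw [S.rmul_val K _ a (by rw [rrng_val, S.src_rng]), rrng_val]
    exact S.rng_mul_self a.1
  src_inv a := Subtype.ext (S.src_inv a.1)
  rng_inv a := Subtype.ext (S.rng_inv a.1)
  mul_inv a := by
    apply Subtype.ext
    rw [S.rmul_val K a _ (by rw [rinv_val, S.rng_inv]), rinv_val]
    exact S.mul_inv a.1
  inv_mul a := by
    apply Subtype.ext
    rw [S.rmul_val K _ a (by rw [rinv_val, S.src_inv]), rinv_val]
    exact S.inv_mul a.1

variable {S K}

/-- The data of a groupoid equivalence between `G` and `H`: a space `Z` carrying commuting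
free and proper continuous actions of `G` (on the left) and `H` (on the right), whose anchor
maps `ρ : Z → G⁰` and `σ : Z → H⁰` induce homeomorphisms `Z/H ≅ G⁰` and `G\Z ≅ H⁰`.
The latter conditions are encoded by requiring that the fibres of `ρ` are exactly the
`H`-orbits, that `ρ` is surjective onto `G⁰`, and that `ρ` is a topological quotient map onto
`G⁰` (and symmetrically for `σ`): this says precisely that the induced map `Z/H → G⁰` is a
homeomorphism. -/
structure GroupoidEquivalenceData [TopologicalSpace G] [TopologicalSpace H]
    (S : GroupoidStruct G) (T : GroupoidStruct H) (Z : Type w) [TopologicalSpace Z] where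
  ρ : Z → G
  σ : Z → H
  ρ_unit : ∀ z, ρ z ∈ S.units
  σ_unit : ∀ z, σ z ∈ T.units
  continuous_ρ : Continuous ρ
  continuous_σ : Continuous σ
  actL : G → Z → Z
  actR : Z → H → Z
  ρ_actL : ∀ g z, S.src g = ρ z → ρ (actL g z) = S.rng g
  σ_actL : ∀ g z, S.src g = ρ z → σ (actL g z) = σ z
  actL_unit : ∀ z, actL (ρ z) z = z
  actL_mul : ∀ g g' z, S.src g = S.rng g' → S.src g' = ρ z →
    actL (S.mul g g') z = actL g (actL g' z)
  σ_actR : ∀ z h, σ z = T.rng h → σ (actR z h) = T.src h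
  ρ_actR : ∀ z h, σ z = T.rng h → ρ (actR z h) = ρ z
  actR_unit : ∀ z, actR z (σ z) = z
  actR_mul : ∀ z h h', σ z = T.rng h → T.src h = T.rng h' →
    actR (actR z h) h' = actR z (T.mul h h')
  act_comm : ∀ g z h, S.src g = ρ z → σ z = T.rng h →
    actL g (actR z h) = actR (actL g z) h
  continuousOn_actL :
    ContinuousOn (fun p : G × Z => actL p.1 p.2) {p : G × Z | S.src p.1 = ρ p.2}
  continuousOn_actR :
    ContinuousOn (fun p : Z × H => actR p.1 p.2) {p : Z × H | σ p.1 = T.rng p.2}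
  free_actL : ∀ g z, S.src g = ρ z → actL g z = z → g = ρ z
  free_actR : ∀ z h, σ z = T.rng h → actR z h = z → h = σ z
  proper_actL : IsProperMap (fun p : {q : G × Z // S.src q.1 = ρ q.2} =>
    ((actL p.1.1 p.1.2, p.1.2) : Z × Z))
  proper_actR : IsProperMap (fun p : {q : Z × H // σ q.1 = T.rng q.2} =>
    ((actR p.1.1 p.1.2, p.1.1) : Z × Z))
  ρ_fiber_orbit : ∀ z z', ρ z = ρ z' ↔ ∃ h, σ z = T.rng h ∧ z' = actR z h
  σ_fiber_orbit : ∀ z z', σ z = σ z' ↔ ∃ g, S.src g = ρ z ∧ z' = actL g z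
  ρ_surj : Set.range ρ = S.units
  σ_surj : Set.range σ = T.units
  quotient_ρ : Topology.IsQuotientMap (fun z => (⟨ρ z, ρ_unit z⟩ : S.units))
  quotient_σ : Topology.IsQuotientMap (fun z => (⟨σ z, σ_unit z⟩ : T.units))

/-- `G` and `H` are groupoid equivalent if there exists a `G`–`H` equivalence. -/
def GroupoidEquivalent [TopologicalSpace G] [TopologicalSpace H]
    (S : GroupoidStruct G) (T : GroupoidStruct H) : Prop :=
  ∃ (Z : Type (max u v)) (_ : TopologicalSpace Z), Nonempty (GroupoidEquivalenceData S T Z)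

/-- Kakutani equivalence of ample groupoids: there are full clopen subsets `X ⊆ G⁰`, `Y ⊆ H⁰`
with `G|_X ≅ H|_Y`. -/
def KakutaniEquivalent [TopologicalSpace G] [TopologicalSpace H]
    (S : GroupoidStruct G) (T : GroupoidStruct H) : Prop :=
  ∃ (X : Set G) (Y : Set H), S.IsUnitClopen X ∧ S.IsFull X ∧ T.IsUnitClopen Y ∧ T.IsFull Y ∧
    Nonempty (GroupoidIso (S.restrict X) (T.restrict Y))

end GroupoidStruct


namespace GroupoidStruct

section Aux

variable {G : Type u} [TopologicalSpace G] {S : GroupoidStruct G}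

lemma rng_mem_units (S : GroupoidStruct G) (g : G) : S.rng g ∈ S.units :=
  ⟨S.src_rng g, S.rng_rng g⟩

lemma src_mem_units (S : GroupoidStruct G) (g : G) : S.src g ∈ S.units :=
  ⟨S.src_src g, S.rng_src g⟩

lemma unit_rng {u : G} (h : u ∈ S.units) : S.rng u = u := h.2

lemma unit_src {u : G} (h : u ∈ S.units) : S.src u = u := h.1

lemma rng_image_of_subset_units {X : Set G} (h : X ⊆ S.units) : S.rng '' X = X := by
  apply Set.ext; intro x
  constructor
  · rintro ⟨y, hy, rfl⟩; rwa [unit_rng (h hy)]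
  · intro hx; exact ⟨x, hx, unit_rng (h hx)⟩

lemma src_image_of_subset_units {X : Set G} (h : X ⊆ S.units) : S.src '' X = X := by
  apply Set.ext; intro x
  constructor
  · rintro ⟨y, hy, rfl⟩; rwa [unit_src (h hy)]
  · intro hx; exact ⟨x, hx, unit_src (h hx)⟩

lemma IsAmple.continuous_rng (hS : S.IsAmple) : Continuous S.rng :=
  continuous_subtype_val.comp hS.isLocalHomeomorph_rngMap.continuous

lemma IsAmple.continuous_src (hS : S.IsAmple) : Continuous S.src :=
  continuous_subtype_val.comp hS.isLocalHomeomorph_srcMap.continuous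

lemma IsAmple.isOpen_units (hS : S.IsAmple) : IsOpen S.units := by
  rw [isOpen_iff_forall_mem_open]
  intro u hu
  obtain ⟨e, he, hfe⟩ := hS.isLocalHomeomorph_srcMap u
  refine ⟨e.source ∩ S.src ⁻¹' e.source, ?_, e.open_source.inter
    (e.open_source.preimage hS.continuous_src), he, ?_⟩
  · rintro g ⟨hg1, hg2⟩
    have key : S.srcMap (S.src g) = S.srcMap g := Subtype.ext (S.src_src g)
    rw [hfe] at key
    have hsg : S.src g = g := e.injOn hg2 hg1 key
    refine ⟨hsg, ?_⟩
    calc S.rng g = S.rng (S.src g) := by rw [hsg]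
    _ = S.src g := S.rng_src g
    _ = g := hsg
  · rw [Set.mem_preimage, unit_src hu]; exact he

lemma IsAmple.isOpen_val_image (hS : S.IsAmple) {D : Set S.units} (hD : IsOpen D) :
    IsOpen (Subtype.val '' D) :=
  hS.isOpen_units.isOpenEmbedding_subtypeVal.isOpenMap D hD

/-- `C` is clopen in the unit space (complement phrased via `S.units \ C`). -/
def CO (S : GroupoidStruct G) (C : Set G) : Prop :=
  C ⊆ S.units ∧ IsOpen C ∧ IsOpen (S.units \ C)

lemma co_units (hS : S.IsAmple) : S.CO S.units :=
  ⟨le_refl _, hS.isOpen_units, by simp⟩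

lemma CO.inter {C D : Set G} (hC : S.CO C) (hD : S.CO D) : S.CO (C ∩ D) := by
  refine ⟨fun x hx => hC.1 hx.1, hC.2.1.inter hD.2.1, ?_⟩
  have : S.units \ (C ∩ D) = (S.units \ C) ∪ (S.units \ D) := by
    ext x; simp [Set.mem_diff]; tauto
  rw [this]; exact hC.2.2.union hD.2.2

lemma CO.union {C D : Set G} (hC : S.CO C) (hD : S.CO D) : S.CO (C ∪ D) := by
  refine ⟨Set.union_subset hC.1 hD.1, hC.2.1.union hD.2.1, ?_⟩
  have : S.units \ (C ∪ D) = (S.units \ C) ∩ (S.units \ D) := by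
    ext x; simp [Set.mem_diff]; tauto
  rw [this]; exact hC.2.2.inter hD.2.2

lemma CO.diff {C D : Set G} (hC : S.CO C) (hD : S.CO D) : S.CO (C \ D) := by
  refine ⟨fun x hx => hC.1 hx.1, ?_, ?_⟩
  · have : C \ D = C ∩ (S.units \ D) := by
      ext x
      constructor
      · intro hx; exact ⟨hx.1, hC.1 hx.1, hx.2⟩
      · intro hx; exact ⟨hx.1, hx.2.2⟩
    rw [this]; exact hC.2.1.inter hD.2.2
  · have : S.units \ (C \ D) = (S.units \ C) ∪ D := by
      ext x
      constructor
      · intro hx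
        by_cases hxC : x ∈ C
        · by_cases hxD : x ∈ D
          · exact Or.inr hxD
          · exact absurd ⟨hxC, hxD⟩ hx.2
        · exact Or.inl ⟨hx.1, hxC⟩
      · rintro (hx | hx)
        · exact ⟨hx.1, fun h => hx.2 h.1⟩
        · exact ⟨hD.1 hx, fun h => h.2 hx⟩
    rw [this]; exact hC.2.2.union hD.2.1

lemma CO.isClosed_rng_preimage (hS : S.IsAmple) {C : Set G} (hC : S.CO C) :
    IsClosed (S.rng ⁻¹' C) := by
  rw [← isOpen_compl_iff]
  have : (S.rng ⁻¹' C)ᶜ = S.rng ⁻¹' (S.units \ C) := by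
    ext g
    simp only [Set.mem_compl_iff, Set.mem_preimage, Set.mem_diff]
    exact ⟨fun h => ⟨S.rng_mem_units g, h⟩, fun h => h.2⟩
  rw [this]; exact hC.2.2.preimage hS.continuous_rng

lemma IsAmple.co_of_isUnitClopen (hS : S.IsAmple) {C : Set G} (h : S.IsUnitClopen C) :
    S.CO C := by
  obtain ⟨hsub, hclopen⟩ := h
  have h1 : C = Subtype.val '' {x : S.units | (x : G) ∈ C} := by
    ext x
    constructor
    · intro hx; exact ⟨⟨x, hsub hx⟩, hx, rfl⟩
    · rintro ⟨y, hy, rfl⟩; exact hy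
  have h2 : S.units \ C = Subtype.val '' {x : S.units | (x : G) ∈ C}ᶜ := by
    ext x
    constructor
    · intro hx; exact ⟨⟨x, hx.1⟩, hx.2, rfl⟩
    · rintro ⟨y, hy, rfl⟩; exact ⟨y.2, hy⟩
  refine ⟨hsub, ?_, ?_⟩
  · rw [h1]; exact hS.isOpen_val_image hclopen.2
  · rw [h2]; exact hS.isOpen_val_image hclopen.1.isOpen_compl

/-- A "good" compact open bisection with source inside `K`. -/
def Good (S : GroupoidStruct G) (K V : Set G) : Prop :=
  IsCompact V ∧ IsOpen V ∧ Set.InjOn S.rng V ∧ Set.InjOn S.src V ∧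
  (∀ U, U ⊆ V → IsOpen U → IsOpen (S.rng '' U) ∧ IsOpen (S.src '' U)) ∧ S.src '' V ⊆ K

lemma good_empty (S : GroupoidStruct G) (K : Set G) : S.Good K ∅ := by
  refine ⟨isCompact_empty, isOpen_empty, ?_, ?_, ?_, ?_⟩
  · intro x hx; exact absurd hx (Set.notMem_empty x)
  · intro x hx; exact absurd hx (Set.notMem_empty x)
  · intro U hU _
    rw [Set.subset_empty_iff] at hU
    subst hU; simp
  · simp

lemma Good.co_image (hS : S.IsAmple) {K V : Set G} (hV : S.Good K V)
    {U : Set G} (hUV : U ⊆ V) (hUopen : IsOpen U) (hUcpt : IsCompact U) :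
    S.CO (S.rng '' U) ∧ S.CO (S.src '' U) := by
  haveI := hS.t2_units
  constructor
  · refine ⟨?_, (hV.2.2.2.2.1 U hUV hUopen).1, ?_⟩
    · rintro x ⟨g, _, rfl⟩; exact S.rng_mem_units g
    · have hD : IsCompact (S.rngMap '' U) := hUcpt.image hS.isLocalHomeomorph_rngMap.continuous
      have hDc : IsClosed (S.rngMap '' U) := hD.isClosed
      have : S.units \ (S.rng '' U) = Subtype.val '' (S.rngMap '' U)ᶜ := by
        ext x
        constructor
        · intro hx
          refine ⟨⟨x, hx.1⟩, ?_, rfl⟩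
          rintro ⟨g, hg, hgx⟩
          exact hx.2 ⟨g, hg, congrArg Subtype.val hgx⟩
        · rintro ⟨y, hy, rfl⟩
          refine ⟨y.2, ?_⟩
          rintro ⟨g, hg, hgx⟩
          exact hy ⟨g, hg, Subtype.ext hgx⟩
      rw [this]; exact hS.isOpen_val_image hDc.isOpen_compl
  · refine ⟨?_, (hV.2.2.2.2.1 U hUV hUopen).2, ?_⟩
    · rintro x ⟨g, _, rfl⟩; exact S.src_mem_units g
    · have hD : IsCompact (S.srcMap '' U) := hUcpt.image hS.isLocalHomeomorph_srcMap.continuous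
      have hDc : IsClosed (S.srcMap '' U) := hD.isClosed
      have : S.units \ (S.src '' U) = Subtype.val '' (S.srcMap '' U)ᶜ := by
        ext x
        constructor
        · intro hx
          refine ⟨⟨x, hx.1⟩, ?_, rfl⟩
          rintro ⟨g, hg, hgx⟩
          exact hx.2 ⟨g, hg, congrArg Subtype.val hgx⟩
        · rintro ⟨y, hy, rfl⟩
          refine ⟨y.2, ?_⟩
          rintro ⟨g, hg, hgx⟩
          exact hy ⟨g, hg, Subtype.ext hgx⟩
      rw [this]; exact hS.isOpen_val_image hDc.isOpen_compl

lemma rng_image_inter_preimage (S : GroupoidStruct G) (V C : Set G) :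
    S.rng '' (V ∩ S.rng ⁻¹' C) = (S.rng '' V) ∩ C := by
  ext x
  constructor
  · rintro ⟨g, ⟨hgV, hgC⟩, rfl⟩; exact ⟨⟨g, hgV, rfl⟩, hgC⟩
  · rintro ⟨⟨g, hgV, rfl⟩, hC⟩; exact ⟨g, ⟨hgV, hC⟩, rfl⟩

lemma exists_good_family (hS : S.IsAmple) (hc : IsSigmaCompact S.units)
    {K : Set G} (hK : S.CO K) (hKf : S.IsFull K) :
    ∃ V : ℕ → Set G, (∀ n, S.Good K (V n)) ∧ (⋃ n, S.rng '' V n) = S.units := by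
  -- pointwise good bisections
  have point : ∀ u : S.units, ∃ W : Set G, S.Good K W ∧ (u : G) ∈ S.rng '' W := by
    rintro ⟨u, hu⟩
    have : u ∈ S.rng '' (S.src ⁻¹' K) := by rw [hKf]; exact hu
    obtain ⟨g, hgK, hgu⟩ := this
    obtain ⟨er, hger, hfer⟩ := hS.isLocalHomeomorph_rngMap g
    obtain ⟨es, hges, hfes⟩ := hS.isLocalHomeomorph_srcMap g
    obtain ⟨B, hB1, hB2⟩ := hS.compact_open_basis
    have hOopen : IsOpen (er.source ∩ es.source ∩ S.src ⁻¹' K) :=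
      (er.open_source.inter es.open_source).inter (hK.2.1.preimage hS.continuous_src)
    have hgO : g ∈ er.source ∩ es.source ∩ S.src ⁻¹' K := ⟨⟨hger, hges⟩, hgK⟩
    obtain ⟨W, hWB, hgW, hWO⟩ := hB2.exists_subset_of_mem_open hgO hOopen
    have hWr : W ⊆ er.source := fun x hx => ((hWO hx).1).1
    have hWs : W ⊆ es.source := fun x hx => ((hWO hx).1).2
    refine ⟨W, ⟨(hB1 W hWB).1, (hB1 W hWB).2, ?_, ?_, ?_, ?_⟩, ⟨g, hgW, hgu⟩⟩
    · intro x hx y hy hxy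
      refine er.injOn (hWr hx) (hWr hy) ?_
      rw [← hfer]
      exact Subtype.ext hxy
    · intro x hx y hy hxy
      refine es.injOn (hWs hx) (hWs hy) ?_
      rw [← hfes]
      exact Subtype.ext hxy
    · intro U hU hUopen
      constructor
      · have : S.rng '' U = Subtype.val '' (S.rngMap '' U) := by
          rw [← Set.image_comp]; rfl
        rw [this, hfer]
        exact hS.isOpen_val_image (er.isOpen_image_of_subset_source hUopen (hU.trans hWr))
      · have : S.src '' U = Subtype.val '' (S.srcMap '' U) := by
          rw [← Set.image_comp]; rfl
        rw [this, hfes]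
        exact hS.isOpen_val_image (es.isOpen_image_of_subset_source hUopen (hU.trans hWs))
    · rintro x ⟨y, hy, rfl⟩
      exact (hWO hy).2
  choose Vu hVu1 hVu2 using point
  obtain ⟨Cs, hCcpt, hCU⟩ := hc
  have hCsub : ∀ m, Cs m ⊆ S.units := by
    intro m; rw [← hCU]; exact Set.subset_iUnion _ m
  have subcov : ∀ m, ∃ t : Finset S.units, Cs m ⊆ ⋃ u ∈ t, S.rng '' Vu u := by
    intro m
    apply (hCcpt m).elim_finite_subcover (fun u : S.units => S.rng '' Vu u)
      (fun u => ((hVu1 u).2.2.2.2.1 (Vu u) (subset_refl _) (hVu1 u).2.1).1)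
    intro x hx
    exact Set.mem_iUnion.mpr ⟨⟨x, hCsub m hx⟩, hVu2 _⟩
  choose t ht using subcov
  classical
  set F : ℕ → ℕ → Set G := fun m i =>
    if h : i < ((t m).toList).length then Vu (((t m).toList).get ⟨i, h⟩) else ∅ with hF
  refine ⟨fun j => F (Nat.unpair j).1 (Nat.unpair j).2, ?_, ?_⟩
  · intro j
    by_cases h : (Nat.unpair j).2 < ((t (Nat.unpair j).1).toList).length
    · simp only [hF, dif_pos h]; exact hVu1 _
    · simp only [hF, dif_neg h]; exact S.good_empty K
  · apply Set.Subset.antisymm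
    · rintro x ⟨s, ⟨j, rfl⟩, ⟨g, _, rfl⟩⟩
      exact S.rng_mem_units g
    · intro x hx
      rw [← hCU] at hx
      obtain ⟨s, ⟨m, rfl⟩, hxm⟩ := hx
      have := ht m hxm
      obtain ⟨s, ⟨u, rfl⟩, hs⟩ := this
      simp only [Set.mem_iUnion, exists_prop] at hs
      obtain ⟨hut, hxu⟩ := hs
      have : u ∈ (t m).toList := Finset.mem_toList.mpr hut
      obtain ⟨i, hget⟩ := List.mem_iff_get.mp this
      refine Set.mem_iUnion.mpr ⟨Nat.pair m i.1, ?_⟩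
      have h1 : (Nat.unpair (Nat.pair m i.1)).1 = m := by rw [Nat.unpair_pair]
      have h2 : (Nat.unpair (Nat.pair m i.1)).2 = i.1 := by rw [Nat.unpair_pair]
      simp only [hF, h1, h2, dif_pos i.2]
      have : ((t m).toList).get ⟨i.1, i.2⟩ = u := by
        convert hget
      rw [this]
      exact hxu

end Aux

end GroupoidStruct


namespace GroupoidStruct

/-- Level of a copy index. -/
def lvl (x : ℕ) : ℕ := (Nat.unpair x).1

/-- Data of a copy index. -/
def idx (x : ℕ) : ℕ := (Nat.unpair x).2

/-- The bisection index encoded in a source-copy index. -/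
def nIdx (b : ℕ) : ℕ := (Nat.unpair (Nat.unpair b).2).1

/-- The inner data encoded in a source-copy index. -/
def sIdx (b : ℕ) : ℕ := (Nat.unpair (Nat.unpair b).2).2

lemma pair_lvl_idx (x : ℕ) : Nat.pair (lvl x) (idx x) = x := Nat.pair_unpair x

lemma lvl_pair (x y : ℕ) : lvl (Nat.pair x y) = x := by simp [lvl, Nat.unpair_pair]

lemma idx_pair (x y : ℕ) : idx (Nat.pair x y) = y := by simp [idx, Nat.unpair_pair]

lemma pair_nIdx_sIdx (b : ℕ) : Nat.pair (nIdx b) (sIdx b) = idx b := Nat.pair_unpair _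

lemma nIdx_pair (L n t : ℕ) : nIdx (Nat.pair L (Nat.pair n t)) = n := by
  simp [nIdx, Nat.unpair_pair]

lemma sIdx_pair (L n t : ℕ) : sIdx (Nat.pair L (Nat.pair n t)) = t := by
  simp [sIdx, Nat.unpair_pair]

variable {G : Type u}

/-- The Schröder–Bernstein iteration sets. -/
def Wf (S : GroupoidStruct G) (K : Set G) (V A : ℕ → Set G) : ℕ → ℕ → Set G
  | 0, _ => S.units
  | L+1, t => (S.units \ K) ∪
      S.src '' (V (Nat.unpair t).1 ∩
        S.rng ⁻¹' (Wf S K V A L (Nat.unpair t).2 ∩ A (Nat.unpair t).1))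

lemma wf_zero (S : GroupoidStruct G) (K : Set G) (V A : ℕ → Set G) (t : ℕ) :
    S.Wf K V A 0 t = S.units := rfl

lemma wf_succ (S : GroupoidStruct G) (K : Set G) (V A : ℕ → Set G) (L t : ℕ) :
    S.Wf K V A (L+1) t = (S.units \ K) ∪
      S.src '' (V (Nat.unpair t).1 ∩
        S.rng ⁻¹' (S.Wf K V A L (Nat.unpair t).2 ∩ A (Nat.unpair t).1)) := rfl

lemma wf_succ' (S : GroupoidStruct G) (K : Set G) (V A : ℕ → Set G) (L b : ℕ) :
    S.Wf K V A (L+1) (idx b) = (S.units \ K) ∪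
      S.src '' (V (nIdx b) ∩ S.rng ⁻¹' (S.Wf K V A L (sIdx b) ∩ A (nIdx b))) := rfl

-- The slice of the unitary bisection at range copy `a` and source copy `b`.
open Classical in
noncomputable def slice (S : GroupoidStruct G) (K : Set G) (V A : ℕ → Set G) (a b : ℕ) : Set G :=
  if lvl b = lvl a ∧ sIdx b = idx a then
    V (nIdx b) ∩ S.rng ⁻¹' (S.Wf K V A (lvl a) (idx a) ∩ A (nIdx b))
  else if lvl a = lvl b + 1 ∧ idx a = idx b then
    K \ S.Wf K V A (lvl a) (idx a)
  else ∅

lemma slice_f (S : GroupoidStruct G) (K : Set G) (V A : ℕ → Set G) {a b : ℕ}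
    (h : lvl b = lvl a ∧ sIdx b = idx a) :
    S.slice K V A a b =
      V (nIdx b) ∩ S.rng ⁻¹' (S.Wf K V A (lvl a) (idx a) ∩ A (nIdx b)) := if_pos h

lemma slice_g (S : GroupoidStruct G) (K : Set G) (V A : ℕ → Set G) {a b : ℕ}
    (hf : ¬(lvl b = lvl a ∧ sIdx b = idx a)) (h : lvl a = lvl b + 1 ∧ idx a = idx b) :
    S.slice K V A a b = K \ S.Wf K V A (lvl a) (idx a) := by
  rw [slice, if_neg hf, if_pos h]

lemma mem_slice_cases {S : GroupoidStruct G} {K : Set G} {V A : ℕ → Set G} {g : G} {a b : ℕ}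
    (hg : g ∈ S.slice K V A a b) :
    ((lvl b = lvl a ∧ sIdx b = idx a) ∧
      g ∈ V (nIdx b) ∩ S.rng ⁻¹' (S.Wf K V A (lvl a) (idx a) ∩ A (nIdx b))) ∨
    ((lvl a = lvl b + 1 ∧ idx a = idx b) ∧ g ∈ K \ S.Wf K V A (lvl a) (idx a)) := by
  by_cases h1 : lvl b = lvl a ∧ sIdx b = idx a
  · left; refine ⟨h1, ?_⟩; rwa [slice_f S K V A h1] at hg
  · by_cases h2 : lvl a = lvl b + 1 ∧ idx a = idx b
    · right; refine ⟨h2, ?_⟩; rwa [slice_g S K V A h1 h2] at hg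
    · rw [slice, if_neg h1, if_neg h2] at hg
      exact absurd hg (Set.notMem_empty g)

set_option maxHeartbeats 2000000 in
theorem main_aux [TopologicalSpace G] {S : GroupoidStruct G} {K : Set G}
    (hS : S.IsAmple) (hCOK : S.CO K) (V A : ℕ → Set G)
    (hGood : ∀ n, S.Good K (V n)) (hA : ∀ n, S.rng '' V n = A n)
    (hACO : ∀ n, S.CO (A n))
    (hDis : ∀ m n, m ≠ n → ∀ x, x ∈ A m → x ∈ A n → False)
    (hAU : (⋃ n, A n) = S.units) :
    ∃ Y : Set (G × ℕ × ℕ),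
      (S.prod Rho).IsOpenBisection Y ∧
      (S.prod Rho).rng '' Y = {p : G × ℕ × ℕ | p.1 ∈ S.units ∧ p.2.1 = p.2.2} ∧
      (S.prod Rho).src '' Y = {p : G × ℕ × ℕ | p.1 ∈ K ∧ p.2.1 = p.2.2} := by
  -- basic facts about the W sets
  have hWco : ∀ L t, S.CO (S.Wf K V A L t) := by
    intro L
    induction L with
    | zero => intro t; exact co_units hS
    | succ L ih =>
      intro t
      refine CO.union ((co_units hS).diff hCOK) ?_
      have hC : S.CO (S.Wf K V A L (Nat.unpair t).2 ∩ A (Nat.unpair t).1) :=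
        (ih _).inter (hACO _)
      have hUopen : IsOpen (V (Nat.unpair t).1 ∩
          S.rng ⁻¹' (S.Wf K V A L (Nat.unpair t).2 ∩ A (Nat.unpair t).1)) :=
        (hGood _).2.1.inter (hC.2.1.preimage hS.continuous_rng)
      have hUcpt : IsCompact (V (Nat.unpair t).1 ∩
          S.rng ⁻¹' (S.Wf K V A L (Nat.unpair t).2 ∩ A (Nat.unpair t).1)) :=
        (hGood _).1.inter_right (hC.isClosed_rng_preimage hS)
      exact ((hGood _).co_image hS Set.inter_subset_left hUopen hUcpt).2
  have hWsub : ∀ L t, S.Wf K V A L t ⊆ S.units := fun L t => (hWco L t).1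
  have hKWco : ∀ L t, S.CO (K \ S.Wf K V A L t) := fun L t => hCOK.diff (hWco L t)
  -- openness of slices and of images of open subsets of slices
  have hWAopen : ∀ (L t n : ℕ), IsOpen (V n ∩ S.rng ⁻¹' (S.Wf K V A L t ∩ A n)) :=
    fun L t n => (hGood n).2.1.inter
      (((hWco L t).inter (hACO n)).2.1.preimage hS.continuous_rng)
  have hsliceOpen : ∀ a b, IsOpen (S.slice K V A a b) := by
    intro a b
    by_cases h1 : lvl b = lvl a ∧ sIdx b = idx a
    · rw [slice_f S K V A h1]; exact hWAopen _ _ _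
    · by_cases h2 : lvl a = lvl b + 1 ∧ idx a = idx b
      · rw [slice_g S K V A h1 h2]; exact (hKWco _ _).2.1
      · rw [slice, if_neg h1, if_neg h2]; exact isOpen_empty
  have himg : ∀ (a b : ℕ) (U : Set G), IsOpen U →
      IsOpen (S.rng '' (U ∩ S.slice K V A a b)) ∧
      IsOpen (S.src '' (U ∩ S.slice K V A a b)) := by
    intro a b U hU
    by_cases h1 : lvl b = lvl a ∧ sIdx b = idx a
    · rw [slice_f S K V A h1]
      exact (hGood _).2.2.2.2.1 _ (fun x hx => hx.2.1) (hU.inter (hWAopen _ _ _))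
    · by_cases h2 : lvl a = lvl b + 1 ∧ idx a = idx b
      · rw [slice_g S K V A h1 h2]
        have hsub : U ∩ (K \ S.Wf K V A (lvl a) (idx a)) ⊆ S.units :=
          fun x hx => hCOK.1 hx.2.1
        rw [rng_image_of_subset_units hsub, src_image_of_subset_units hsub]
        exact ⟨hU.inter (hKWco _ _).2.1, hU.inter (hKWco _ _).2.1⟩
      · rw [slice, if_neg h1, if_neg h2]
        simp
  -- the bisection
  set Y : Set (G × ℕ × ℕ) := {p | p.1 ∈ S.slice K V A p.2.1 p.2.2} with hYdef
  have hYopen : IsOpen Y := by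
    rw [isOpen_iff_forall_mem_open]
    rintro ⟨g, a, b⟩ hp
    refine ⟨S.slice K V A a b ×ˢ {(a, b)}, ?_, (hsliceOpen a b).prod (isOpen_discrete _), hp, rfl⟩
    rintro ⟨h, ij⟩ ⟨hh, hij⟩
    simp only [Set.mem_singleton_iff] at hij
    subst hij
    exact hh
  -- continuity of the two maps
  have hrng_cont : Continuous (S.prod Rho).rng := by
    show Continuous fun p : G × ℕ × ℕ => ((S.rng p.1, p.2.1, p.2.1) : G × ℕ × ℕ)
    exact (hS.continuous_rng.comp continuous_fst).prodMk
      ((continuous_fst.comp continuous_snd).prodMk (continuous_fst.comp continuous_snd))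
  have hsrc_cont : Continuous (S.prod Rho).src := by
    show Continuous fun p : G × ℕ × ℕ => ((S.src p.1, p.2.2, p.2.2) : G × ℕ × ℕ)
    exact (hS.continuous_src.comp continuous_fst).prodMk
      ((continuous_snd.comp continuous_snd).prodMk (continuous_snd.comp continuous_snd))
  -- injectivity of rng on Y
  have hrng_inj : Set.InjOn (S.prod Rho).rng Y := by
    rintro ⟨g, a, b⟩ hp ⟨g', a', b'⟩ hp' heq
    have ha : a = a' := congrArg (fun q : G × ℕ × ℕ => q.2.1) heq
    have hr : S.rng g = S.rng g' := congrArg (fun q : G × ℕ × ℕ => q.1) heq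
    subst ha
    have hp1 := mem_slice_cases (g := g) (a := a) (b := b) hp
    have hp2 := mem_slice_cases (g := g') (a := a) (b := b') hp'
    rcases hp1 with ⟨h1, hg⟩ | ⟨h1, hg⟩
    · rcases hp2 with ⟨h2, hg'⟩ | ⟨h2, hg'⟩
      · -- both f-type
        have hnn : nIdx b = nIdx b' := by
          by_contra hne
          exact hDis _ _ hne (S.rng g) hg.2.2 (hr ▸ hg'.2.2)
        have hb : b = b' := by
          rw [← pair_lvl_idx b, ← pair_lvl_idx b', h1.1, h2.1,
            ← pair_nIdx_sIdx b, ← pair_nIdx_sIdx b', h1.2, h2.2, hnn]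
        subst hb
        have hgg : g = g' := (hGood (nIdx b)).2.2.1 hg.1 hg'.1 hr
        rw [hgg]
      · -- f vs g : contradiction
        exfalso
        have : S.rng g' = g' := unit_rng (hCOK.1 hg'.1)
        exact hg'.2 (by rw [← this, ← hr]; exact hg.2.1)
    · rcases hp2 with ⟨h2, hg'⟩ | ⟨h2, hg'⟩
      · exfalso
        have : S.rng g = g := unit_rng (hCOK.1 hg.1)
        exact hg.2 (by rw [← this, hr]; exact hg'.2.1)
      · -- both g-type
        have hb : b = b' := by
          have hl : lvl b = lvl b' := by omega
          rw [← pair_lvl_idx b, ← pair_lvl_idx b', hl, ← h1.2, ← h2.2]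
        subst hb
        have hgg : g = g' := by
          rw [← unit_rng (hCOK.1 hg.1), ← unit_rng (hCOK.1 hg'.1), hr]
        rw [hgg]
  -- injectivity of src on Y
  have hsrc_inj : Set.InjOn (S.prod Rho).src Y := by
    rintro ⟨g, a, b⟩ hp ⟨g', a', b'⟩ hp' heq
    have hb : b = b' := congrArg (fun q : G × ℕ × ℕ => q.2.1) heq
    have hr : S.src g = S.src g' := congrArg (fun q : G × ℕ × ℕ => q.1) heq
    subst hb
    have hp1 := mem_slice_cases (g := g) (a := a) (b := b) hp
    have hp2 := mem_slice_cases (g := g') (a := a') (b := b) hp'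
    rcases hp1 with ⟨h1, hg⟩ | ⟨h1, hg⟩
    · rcases hp2 with ⟨h2, hg'⟩ | ⟨h2, hg'⟩
      · -- both f-type
        have haa : a = a' := by
          rw [← pair_lvl_idx a, ← pair_lvl_idx a', ← h1.1, ← h2.1, ← h1.2, ← h2.2]
        subst haa
        have hgg : g = g' := (hGood (nIdx b)).2.2.2.1 hg.1 hg'.1 hr
        rw [hgg]
      · -- f vs g : contradiction
        exfalso
        have hsm : S.src g ∈ S.src '' (V (nIdx b) ∩
            S.rng ⁻¹' (S.Wf K V A (lvl b) (sIdx b) ∩ A (nIdx b))) := by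
          refine ⟨g, ?_, rfl⟩
          rwa [h1.1, h1.2]
        have hW : S.src g ∈ S.Wf K V A (lvl a') (idx a') := by
          rw [h2.1, h2.2, wf_succ']
          exact Or.inr hsm
        have : S.src g' = g' := unit_src (hCOK.1 hg'.1)
        exact hg'.2 (by rw [← this, ← hr]; exact hW)
    · rcases hp2 with ⟨h2, hg'⟩ | ⟨h2, hg'⟩
      · exfalso
        have hsm : S.src g' ∈ S.src '' (V (nIdx b) ∩
            S.rng ⁻¹' (S.Wf K V A (lvl b) (sIdx b) ∩ A (nIdx b))) := by
          refine ⟨g', ?_, rfl⟩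
          rwa [h2.1, h2.2]
        have hW : S.src g' ∈ S.Wf K V A (lvl a) (idx a) := by
          rw [h1.1, h1.2, wf_succ']
          exact Or.inr hsm
        have : S.src g = g := unit_src (hCOK.1 hg.1)
        exact hg.2 (by rw [← this, hr]; exact hW)
      · -- both g-type
        have haa : a = a' := by
          rw [← pair_lvl_idx a, ← pair_lvl_idx a', h1.1, h2.1, h1.2, h2.2]
        subst haa
        have hgg : g = g' := by
          rw [← unit_src (hCOK.1 hg.1), ← unit_src (hCOK.1 hg'.1), hr]
        rw [hgg]
  -- open map lemmas
  have hmap_open_rng : IsOpenMap (Y.restrict (S.prod Rho).rng) := by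
    intro O hO
    obtain ⟨O', hO', rfl⟩ := isOpen_induced_iff.mp hO
    rw [isOpen_iff_forall_mem_open]
    rintro q ⟨⟨⟨g, a, b⟩, hpY⟩, hpO, rfl⟩
    refine ⟨(S.rng '' ({h : G | (h, a, b) ∈ O'} ∩ S.slice K V A a b)) ×ˢ {(a, a)},
      ?_, ?_, ?_⟩
    · rintro ⟨x, ij⟩ ⟨⟨h, ⟨hhO, hhsl⟩, rfl⟩, hij⟩
      simp only [Set.mem_singleton_iff] at hij
      subst hij
      exact ⟨⟨(h, a, b), hhsl⟩, hhO, rfl⟩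
    · exact ((himg a b _ (hO'.preimage (continuous_id.prodMk continuous_const))).1).prod
        (isOpen_discrete _)
    · exact ⟨⟨g, ⟨hpO, hpY⟩, rfl⟩, rfl⟩
  have hmap_open_src : IsOpenMap (Y.restrict (S.prod Rho).src) := by
    intro O hO
    obtain ⟨O', hO', rfl⟩ := isOpen_induced_iff.mp hO
    rw [isOpen_iff_forall_mem_open]
    rintro q ⟨⟨⟨g, a, b⟩, hpY⟩, hpO, rfl⟩
    refine ⟨(S.src '' ({h : G | (h, a, b) ∈ O'} ∩ S.slice K V A a b)) ×ˢ {(b, b)},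
      ?_, ?_, ?_⟩
    · rintro ⟨x, ij⟩ ⟨⟨h, ⟨hhO, hhsl⟩, rfl⟩, hij⟩
      simp only [Set.mem_singleton_iff] at hij
      subst hij
      exact ⟨⟨(h, a, b), hhsl⟩, hhO, rfl⟩
    · exact ((himg a b _ (hO'.preimage (continuous_id.prodMk continuous_const))).2).prod
        (isOpen_discrete _)
    · exact ⟨⟨g, ⟨hpO, hpY⟩, rfl⟩, rfl⟩
  -- the embeddings
  have hemb_rng : Topology.IsEmbedding (Y.restrict (S.prod Rho).rng) := by
    refine (Topology.IsOpenEmbedding.of_continuous_injective_isOpenMap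
      (hrng_cont.comp continuous_subtype_val) ?_ hmap_open_rng).isEmbedding
    rintro ⟨p, hp⟩ ⟨p', hp'⟩ h
    exact Subtype.ext (hrng_inj hp hp' h)
  have hemb_src : Topology.IsEmbedding (Y.restrict (S.prod Rho).src) := by
    refine (Topology.IsOpenEmbedding.of_continuous_injective_isOpenMap
      (hsrc_cont.comp continuous_subtype_val) ?_ hmap_open_src).isEmbedding
    rintro ⟨p, hp⟩ ⟨p', hp'⟩ h
    exact Subtype.ext (hsrc_inj hp hp' h)
  refine ⟨Y, ⟨hYopen, hemb_rng, hemb_src⟩, ?_, ?_⟩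
  · -- range image
    apply Set.Subset.antisymm
    · rintro q ⟨⟨g, a, b⟩, _, rfl⟩
      exact ⟨S.rng_mem_units g, rfl⟩
    · rintro ⟨u, i, j⟩ ⟨hu, hij⟩
      simp only at hij
      subst hij
      by_cases hw : u ∈ S.Wf K V A (lvl i) (idx i)
      · have : u ∈ ⋃ n, A n := hAU ▸ hu
        obtain ⟨s, ⟨n, rfl⟩, hn⟩ := this
        have : u ∈ S.rng '' V n := (hA n) ▸ hn
        obtain ⟨g, hgV, hgu⟩ := this
        refine ⟨(g, i, Nat.pair (lvl i) (Nat.pair n (idx i))), ?_, ?_⟩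
        · show g ∈ S.slice K V A i _
          rw [slice_f S K V A ⟨by rw [lvl_pair], by rw [sIdx_pair]⟩, nIdx_pair]
          exact ⟨hgV, by rw [Set.mem_preimage, hgu]; exact ⟨hw, hn⟩⟩
        · show (S.rng g, i, i) = (u, i, i)
          rw [hgu]
      · rcases hL : lvl i with _ | M
        · exfalso
          rw [hL, wf_zero] at hw
          exact hw hu
        · have huK : u ∈ K := by
            by_contra huK
            rw [hL, wf_succ] at hw
            exact hw (Or.inl ⟨hu, huK⟩)
          refine ⟨(u, i, Nat.pair M (idx i)), ?_, ?_⟩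
          · show u ∈ S.slice K V A i _
            rw [slice_g S K V A ?_ ?_]
            · exact ⟨huK, hw⟩
            · rintro ⟨hc, -⟩
              rw [lvl_pair, hL] at hc
              omega
            · exact ⟨by rw [lvl_pair, hL], by rw [idx_pair]⟩
          · show (S.rng u, i, i) = (u, i, i)
            rw [unit_rng hu]
  · -- source image
    apply Set.Subset.antisymm
    · rintro q ⟨⟨g, a, b⟩, hp, rfl⟩
      have hp1 := mem_slice_cases (g := g) (a := a) (b := b) hp
      rcases hp1 with ⟨-, hg⟩ | ⟨-, hg⟩
      · exact ⟨(hGood (nIdx b)).2.2.2.2.2 ⟨g, hg.1, rfl⟩, rfl⟩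
      · refine ⟨?_, rfl⟩
        show S.src g ∈ K
        rw [unit_src (hCOK.1 hg.1)]
        exact hg.1
    · rintro ⟨x, i, j⟩ ⟨hx, hij⟩
      simp only at hij
      subst hij
      by_cases hT : x ∈ S.src '' (V (nIdx i) ∩
          S.rng ⁻¹' (S.Wf K V A (lvl i) (sIdx i) ∩ A (nIdx i)))
      · obtain ⟨g, hg, hgx⟩ := hT
        refine ⟨(g, Nat.pair (lvl i) (sIdx i), i), ?_, ?_⟩
        · show g ∈ S.slice K V A _ i
          rw [slice_f S K V A ⟨by rw [lvl_pair], by rw [idx_pair]⟩, lvl_pair, idx_pair]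
          exact hg
        · show (S.src g, i, i) = (x, i, i)
          rw [hgx]
      · refine ⟨(x, Nat.pair (lvl i + 1) (idx i), i), ?_, ?_⟩
        · show x ∈ S.slice K V A _ i
          rw [slice_g S K V A ?_ ?_]
          · rw [lvl_pair, idx_pair, wf_succ']
            refine ⟨hx, ?_⟩
            rintro (h | h)
            · exact h.2 hx
            · exact hT h
          · rintro ⟨hc, -⟩
            rw [lvl_pair] at hc
            omega
          · exact ⟨by rw [lvl_pair], by rw [idx_pair]⟩
        · show (S.src x, i, i) = (x, i, i)
          rw [unit_src (hCOK.1 hx)]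

end GroupoidStruct

open GroupoidStruct in
/-- For an ample groupoid with σ-compact unit space and a clopen `G`-full `K ⊆ G⁰`, there is an
open bisection `Y ⊆ G × ℛ` with `r(Y) = G⁰ × ℕ` and `s(Y) = K × ℕ`
(the unit space of `G × ℛ` being identified with `{(u,(i,i)) : u ∈ G⁰, i ∈ ℕ}`). -/
theorem exists_unitary_bisection
    {G : Type u} [TopologicalSpace G] (S : GroupoidStruct G)
    (hS : S.IsAmple) (hc : IsSigmaCompact S.units)
    {K : Set G} (hK : S.IsUnitClopen K) (hKf : S.IsFull K) :
    ∃ Y : Set (G × ℕ × ℕ),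
      (S.prod Rho).IsOpenBisection Y ∧
      (S.prod Rho).rng '' Y = {p : G × ℕ × ℕ | p.1 ∈ S.units ∧ p.2.1 = p.2.2} ∧
      (S.prod Rho).src '' Y = {p : G × ℕ × ℕ | p.1 ∈ K ∧ p.2.1 = p.2.2} := by
  classical
  have hCOK : S.CO K := hS.co_of_isUnitClopen hK
  obtain ⟨V0, hV0good, hV0cover⟩ := exists_good_family hS hc hCOK hKf
  have hco_empty : S.CO (∅ : Set G) :=
    ⟨Set.empty_subset _, isOpen_empty, by simpa using hS.isOpen_units⟩
  set R : ℕ → Set G := fun n => S.rng '' V0 n with hRdef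
  have hRco : ∀ n, S.CO (R n) :=
    fun n => ((hV0good n).co_image hS (subset_refl _) (hV0good n).2.1 (hV0good n).1).1
  set B : ℕ → Set G := fun n => ⋃ m ∈ Finset.range n, R m with hBdef
  have hBco : ∀ n, S.CO (B n) := by
    have key : ∀ t : Finset ℕ, S.CO (⋃ m ∈ t, R m) := by
      intro t
      induction t using Finset.induction_on with
      | empty => simpa using hco_empty
      | insert _ _ h ih =>
        rw [Finset.set_biUnion_insert]
        exact (hRco _).union ih
    exact fun n => key _
  set A : ℕ → Set G := fun n => R n \ B n with hAdef
  have hACO : ∀ n, S.CO (A n) := fun n => (hRco n).diff (hBco n)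
  set V : ℕ → Set G := fun n => V0 n ∩ S.rng ⁻¹' (A n) with hVdef
  have hGoodV : ∀ n, S.Good K (V n) := by
    intro n
    obtain ⟨hc1, ho1, hir, his, himg0, hsrcK⟩ := hV0good n
    exact ⟨hc1.inter_right ((hACO n).isClosed_rng_preimage hS),
      ho1.inter ((hACO n).2.1.preimage hS.continuous_rng),
      hir.mono Set.inter_subset_left, his.mono Set.inter_subset_left,
      fun U hU hUo => himg0 U (hU.trans Set.inter_subset_left) hUo,
      (Set.image_mono Set.inter_subset_left).trans hsrcK⟩
  have hAsub : ∀ n, A n ⊆ R n := fun n => Set.diff_subset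
  have hA : ∀ n, S.rng '' V n = A n := by
    intro n
    show S.rng '' (V0 n ∩ S.rng ⁻¹' (A n)) = A n
    rw [rng_image_inter_preimage]
    exact Set.inter_eq_right.mpr (hAsub n)
  have hDis : ∀ m n, m ≠ n → ∀ x, x ∈ A m → x ∈ A n → False := by
    intro m n hmn x hxm hxn
    rcases Nat.lt_or_ge m n with h | h
    · exact hxn.2 (Set.mem_biUnion (Finset.mem_range.mpr h) hxm.1)
    · have h' : n < m := by omega
      exact hxm.2 (Set.mem_biUnion (Finset.mem_range.mpr h') hxn.1)
  have hAU : ⋃ n, A n = S.units := by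
    apply Set.Subset.antisymm
    · exact Set.iUnion_subset fun n => (hACO n).1
    · intro x hx
      rw [← hV0cover] at hx
      obtain ⟨s, ⟨n, rfl⟩, hxn⟩ := hx
      have hex : ∃ n, x ∈ R n := ⟨n, hxn⟩
      refine Set.mem_iUnion.mpr ⟨Nat.find hex, Nat.find_spec hex, ?_⟩
      intro hB
      obtain ⟨m, hm, hxm⟩ := Set.mem_iUnion₂.mp hB
      exact Nat.find_min hex (Finset.mem_range.mp hm) hxm
  exact main_aux hS hCOK V A hGoodV hA hACO hDis hAU
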